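/- Suppose A is a symmetric n×n matrix with entries in {0,1} that is diagonalized by the standard Hadamard matrix of order n = 2^k (i.e., H_k⁻¹ A H_k is diagonal). Then A has constant diagonal: all diagonal entries of A are equal. -/
import Mathlib


open Matrix

/-- The standard Hadamard matrix of order `2^k`, indexed by `ℤ₂^k`,
with `(u,v)` entry `(-1)^(u·v)`. -/
noncomputable def stdHadamard (k : ℕ) :
    Matrix (Fin k → ZMod 2) (Fin k → ZMod 2) ℝ :=
  Matrix.of fun u v => (-1 : ℝ) ^ (∑ i, (u i * v i).val)

noncomputable def χ (x : ZMod 2) : ℝ := (-1 : ℝ) ^ x.val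

lemma zmod2_cases : ∀ x : ZMod 2, x = 0 ∨ x = 1 := by decide

lemma χ_add (x y : ZMod 2) : χ (x + y) = χ x * χ y := by
  rcases zmod2_cases x with rfl | rfl <;> rcases zmod2_cases y with rfl | rfl <;>
    simp [χ, show ((1:ZMod 2) + 1) = 0 by decide, show ((1:ZMod 2)).val = 1 by decide] <;>
    norm_num

lemma stdHadamard_eq_prod (k : ℕ) (u v : Fin k → ZMod 2) :
    stdHadamard k u v = ∏ i, χ (u i * v i) := by
  simp [stdHadamard, χ, Finset.prod_pow_eq_pow_sum]

lemma sum_χ (c : ZMod 2) : ∑ b : ZMod 2, χ (c * b) = if c = 0 then 2 else 0 := by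
  have : ∀ f : ZMod 2 → ℝ, ∑ b : ZMod 2, f b = f 0 + f 1 := fun f => by
    exact Fin.sum_univ_two f
  rcases zmod2_cases c with rfl | rfl <;> rw [this] <;>
    simp [χ, show ((1:ZMod 2)).val = 1 by decide] <;> norm_num

lemma H_mul_H (k : ℕ) :
    stdHadamard k * stdHadamard k = ((2:ℝ)^k) • (1 : Matrix (Fin k → ZMod 2) (Fin k → ZMod 2) ℝ) := by
  ext u v
  simp only [mul_apply, Matrix.smul_apply, Matrix.one_apply, smul_eq_mul]
  calc ∑ w, stdHadamard k u w * stdHadamard k w v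
      = ∑ w : Fin k → ZMod 2, ∏ i, χ ((u i + v i) * w i) := by
        refine Finset.sum_congr rfl fun w _ => ?_
        rw [stdHadamard_eq_prod, stdHadamard_eq_prod, ← Finset.prod_mul_distrib]
        refine Finset.prod_congr rfl fun i _ => ?_
        rw [add_mul, χ_add, mul_comm (w i) (v i)]
    _ = ∏ i, ∑ b : ZMod 2, χ ((u i + v i) * b) := by
        rw [Finset.prod_univ_sum, Fintype.piFinset_univ]
    _ = ∏ i, (if u i + v i = 0 then (2:ℝ) else 0) := by
        exact Finset.prod_congr rfl fun i _ => sum_χ _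
    _ = (2:ℝ)^k * (if u = v then 1 else 0) := by
        by_cases h : u = v
        · subst h
          simp [CharTwo.add_self_eq_zero]
        · rw [if_neg h, mul_zero]
          obtain ⟨i, hi⟩ := Function.ne_iff.mp h
          refine Finset.prod_eq_zero (Finset.mem_univ i) ?_
          rw [if_neg]
          intro hz
          apply hi
          have := add_eq_zero_iff_eq_neg.mp hz
          rwa [CharTwo.neg_eq] at this

lemma H_right_inv (k : ℕ) :
    stdHadamard k * (((2:ℝ)^k)⁻¹ • stdHadamard k) = 1 := by
  rw [Matrix.mul_smul, H_mul_H, smul_smul, inv_mul_cancel₀ (by positivity), one_smul]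

lemma H_left_inv (k : ℕ) :
    (((2:ℝ)^k)⁻¹ • stdHadamard k) * stdHadamard k = 1 := by
  rw [Matrix.smul_mul, H_mul_H, smul_smul, inv_mul_cancel₀ (by positivity), one_smul]

lemma H_inv (k : ℕ) : (stdHadamard k)⁻¹ = ((2:ℝ)^k)⁻¹ • stdHadamard k :=
  inv_eq_right_inv (H_right_inv k)

lemma H_sq_one (k : ℕ) (u w : Fin k → ZMod 2) :
    stdHadamard k u w * stdHadamard k w u = 1 := by
  show ((-1:ℝ) ^ (∑ i, (u i * w i).val)) * ((-1:ℝ) ^ (∑ i, (w i * u i).val)) = 1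
  have h : (∑ i, (w i * u i).val) = ∑ i, (u i * w i).val := by
    refine Finset.sum_congr rfl fun i _ => by rw [mul_comm]
  rw [h, ← pow_add]
  exact Even.neg_one_pow ⟨_, rfl⟩

theorem std_hadamard_diag_constant_diagonal (k : ℕ)
    (A : Matrix (Fin k → ZMod 2) (Fin k → ZMod 2) ℝ)
    (hsymm : A.IsSymm)
    (h01 : ∀ u v, A u v = 0 ∨ A u v = 1)
    (hdiag : Matrix.IsDiag ((stdHadamard k)⁻¹ * A * stdHadamard k)) :
    ∀ u v, A u u = A v v := by
  set H := stdHadamard k with hH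
  set D := H⁻¹ * A * H with hD
  have hHinv : H * H⁻¹ = 1 := by rw [H_inv]; exact H_right_inv k
  have hinvH : H⁻¹ * H = 1 := by rw [H_inv]; exact H_left_inv k
  have hA : A = H * D * H⁻¹ := by
    rw [hD]
    calc A = (H * H⁻¹) * A * (H * H⁻¹) := by rw [hHinv, one_mul, mul_one]
    _ = H * (H⁻¹ * A * H) * H⁻¹ := by simp only [Matrix.mul_assoc]
  have key : ∀ u, A u u = ((2:ℝ)^k)⁻¹ * ∑ w, D w w := by
    intro u
    conv_lhs => rw [hA]
    rw [mul_apply]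
    have h1 : ∀ w', (H * D) u w' = H u w' * D w' w' := by
      intro w'
      rw [mul_apply]
      refine Finset.sum_eq_single w' (fun b _ hb => ?_) (fun h => absurd (Finset.mem_univ w') h)
      rw [hdiag hb, mul_zero]
    calc ∑ w', (H * D) u w' * H⁻¹ w' u
        = ∑ w', ((2:ℝ)^k)⁻¹ * D w' w' := by
          refine Finset.sum_congr rfl fun w' _ => ?_
          rw [h1, H_inv, Matrix.smul_apply, smul_eq_mul]
          calc H u w' * D w' w' * (((2:ℝ)^k)⁻¹ * stdHadamard k w' u)
              = ((2:ℝ)^k)⁻¹ * D w' w' * (stdHadamard k u w' * stdHadamard k w' u) := by ring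
          _ = ((2:ℝ)^k)⁻¹ * D w' w' := by rw [H_sq_one, mul_one]
      _ = ((2:ℝ)^k)⁻¹ * ∑ w, D w w := by rw [Finset.mul_sum]
  intro u v
  rw [key u, key v]
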